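/- For all σ > 0 and η > 0, ∫_{−∞}^{∞} h · (π σ²)^{−1/2} exp(−h²/σ²) · erf(h/η) dh = (1/√π) · σ² / √(σ² + η²). -/

import Mathlib

open Real MeasureTheory

/-- The Gaussian error function `erf(x) = (2/√π) ∫₀ˣ exp(−t²) dt`. -/
noncomputable def erf (x : ℝ) : ℝ := (2 / Real.sqrt π) * ∫ t in (0 : ℝ)..x, Real.exp (-t ^ 2)

open Filter Set Topology

lemma cont_gauss : Continuous fun t : ℝ => Real.exp (-t ^ 2) := by continuity

lemma erf_hasDerivAt (x : ℝ) :
    HasDerivAt erf (2 / Real.sqrt π * Real.exp (-x ^ 2)) x := by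
  have h1 : HasDerivAt (fun u : ℝ => ∫ t in (0:ℝ)..u, Real.exp (-t ^ 2))
      (Real.exp (-x ^ 2)) x :=
    intervalIntegral.integral_hasDerivAt_right (cont_gauss.intervalIntegrable _ _)
      (cont_gauss.stronglyMeasurableAtFilter _ _) cont_gauss.continuousAt
  exact h1.const_mul (2 / Real.sqrt π)

lemma erf_zero : erf 0 = 0 := by simp [erf]

lemma erf_neg (x : ℝ) : erf (-x) = - erf x := by
  unfold erf
  have : ∫ t in (0:ℝ)..(-x), Real.exp (-t ^ 2) = - ∫ t in (0:ℝ)..x, Real.exp (-t ^ 2) := by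
    rw [intervalIntegral.integral_symm]
    congr 1
    have := intervalIntegral.integral_comp_neg (a := (0:ℝ)) (b := x)
      (fun t => Real.exp (-t ^ 2))
    simpa using this.symm
  rw [this]; ring

lemma abs_erf_le (x : ℝ) : |erf x| ≤ 2 / Real.sqrt π * |x| := by
  have h : ‖∫ t in (0:ℝ)..x, Real.exp (-t ^ 2)‖ ≤ 1 * |x - 0| := by
    apply intervalIntegral.norm_integral_le_of_norm_le_const
    intro t _
    rw [Real.norm_eq_abs, abs_of_pos (Real.exp_pos _)]
    exact Real.exp_le_one_iff.2 (neg_nonpos.2 (sq_nonneg t))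
  have hs : (0:ℝ) < 2 / Real.sqrt π := by positivity
  calc |erf x| = 2 / Real.sqrt π * |∫ t in (0:ℝ)..x, Real.exp (-t ^ 2)| := by
        rw [erf, abs_mul, abs_of_pos hs]
    _ ≤ 2 / Real.sqrt π * |x| := by
        apply mul_le_mul_of_nonneg_left _ hs.le
        rw [← Real.norm_eq_abs]; simpa using h

lemma erf_tendsto_atTop : Tendsto erf atTop (𝓝 1) := by
  have hint : IntegrableOn (fun t : ℝ => Real.exp (-t ^ 2)) (Ioi 0) := by
    have := integrable_exp_neg_mul_sq (b := 1) one_pos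
    simpa using this.integrableOn
  have h := MeasureTheory.intervalIntegral_tendsto_integral_Ioi 0 hint tendsto_id
  have hval : ∫ t in Ioi (0:ℝ), Real.exp (-t ^ 2) = Real.sqrt π / 2 := by
    have := integral_gaussian_Ioi 1
    simpa using this
  rw [hval] at h
  have := h.const_mul (2 / Real.sqrt π)
  have hπ : Real.sqrt π ≠ 0 := by positivity
  have : Tendsto erf atTop (𝓝 (2 / Real.sqrt π * (Real.sqrt π / 2))) := by
    show Tendsto (fun x : ℝ => 2 / Real.sqrt π * ∫ t in (0:ℝ)..x, Real.exp (-t ^ 2)) atTop _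
    simpa [Function.comp] using this
  convert this using 2
  field_simp

lemma erf_tendsto_atBot : Tendsto erf atBot (𝓝 (-1)) := by
  have h := (erf_tendsto_atTop.comp tendsto_neg_atBot_atTop).neg
  simp only [Function.comp] at h
  exact h.congr fun x => by rw [← erf_neg, neg_neg]

lemma continuous_erf : Continuous erf :=
  Differentiable.continuous (fun x => (erf_hasDerivAt x).differentiableAt)

lemma tendsto_mul_exp_sq (b : ℝ) (hb : 0 < b) :
    Tendsto (fun x : ℝ => x * Real.exp (-b * x ^ 2)) atTop (𝓝 0) := by
  have hg : Tendsto (fun x : ℝ => Real.exp (-(1/2) * x)) atTop (𝓝 0) := by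
    have := Real.tendsto_exp_neg_atTop_nhds_zero.comp
      (tendsto_id.const_mul_atTop (show (0:ℝ) < 1/2 by norm_num))
    exact this.congr fun x => by simp [Function.comp, neg_mul]
  have h := (rpow_mul_exp_neg_mul_sq_isLittleO_exp_neg hb 1).trans_tendsto hg
  exact h.congr' (by filter_upwards [eventually_ge_atTop (0:ℝ)] with x hx; rw [Real.rpow_one])

lemma tendsto_abs_mul_exp_sq_atTop (b : ℝ) (hb : 0 < b) :
    Tendsto (fun x : ℝ => |x| * Real.exp (-b * x ^ 2)) atTop (𝓝 0) :=
  (tendsto_mul_exp_sq b hb).congr'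
    (by filter_upwards [eventually_ge_atTop (0:ℝ)] with x hx; rw [abs_of_nonneg hx])

lemma tendsto_abs_mul_exp_sq_atBot (b : ℝ) (hb : 0 < b) :
    Tendsto (fun x : ℝ => |x| * Real.exp (-b * x ^ 2)) atBot (𝓝 0) := by
  have h := (tendsto_abs_mul_exp_sq_atTop b hb).comp tendsto_neg_atBot_atTop
  exact h.congr fun x => by simp [Function.comp, neg_sq]

lemma exp_erf_bound (b c : ℝ) (x : ℝ) (hc : 0 < c) :
    ‖Real.exp (-b * x ^ 2) * erf (c * x)‖
      ≤ 2 * c / Real.sqrt π * (|x| * Real.exp (-b * x ^ 2)) := by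
  rw [norm_mul, Real.norm_eq_abs, Real.norm_eq_abs, abs_of_pos (Real.exp_pos _)]
  calc Real.exp (-b * x ^ 2) * |erf (c * x)|
      ≤ Real.exp (-b * x ^ 2) * (2 / Real.sqrt π * |c * x|) := by
        exact mul_le_mul_of_nonneg_left (abs_erf_le _) (Real.exp_pos _).le
    _ = 2 * c / Real.sqrt π * (|x| * Real.exp (-b * x ^ 2)) := by
        rw [abs_mul, abs_of_pos hc]; ring

lemma key (b c : ℝ) (hb : 0 < b) (hc : 0 < c) :
    ∫ h : ℝ, h * Real.exp (-b * h ^ 2) * erf (c * h)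
      = c / (b * Real.sqrt (b + c ^ 2)) := by
  set k : ℝ := Real.sqrt (b + c ^ 2) with hkdef
  have hk : 0 < k := Real.sqrt_pos.2 (by positivity)
  have hk2 : k ^ 2 = b + c ^ 2 := Real.sq_sqrt (by positivity)
  have hπ : 0 < Real.sqrt π := Real.sqrt_pos.2 pi_pos
  set Φ : ℝ → ℝ := fun h => -(1 / (2 * b)) * (Real.exp (-b * h ^ 2) * erf (c * h))
      + c / (2 * b * k) * erf (k * h) with hΦdef
  have hderiv : ∀ x : ℝ, HasDerivAt Φ (x * Real.exp (-b * x ^ 2) * erf (c * x)) x := by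
    intro x
    have h1 : HasDerivAt (fun h : ℝ => -b * h ^ 2) (-b * (2 * x)) x := by
      simpa using (hasDerivAt_pow 2 x).const_mul (-b)
    have hexp : HasDerivAt (fun h : ℝ => Real.exp (-b * h ^ 2))
        (Real.exp (-b * x ^ 2) * (-b * (2 * x))) x := h1.exp
    have hcx : HasDerivAt (fun h : ℝ => c * h) c x := by
      simpa using (hasDerivAt_id x).const_mul c
    have hkx : HasDerivAt (fun h : ℝ => k * h) k x := by
      simpa using (hasDerivAt_id x).const_mul k
    have herf1 : HasDerivAt (fun h : ℝ => erf (c * h))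
        (2 / Real.sqrt π * Real.exp (-(c * x) ^ 2) * c) x :=
      (erf_hasDerivAt (c * x)).comp x hcx
    have herf2 : HasDerivAt (fun h : ℝ => erf (k * h))
        (2 / Real.sqrt π * Real.exp (-(k * x) ^ 2) * k) x :=
      (erf_hasDerivAt (k * x)).comp x hkx
    have hmain := ((hexp.mul herf1).const_mul (-(1 / (2 * b)))).add
      (herf2.const_mul (c / (2 * b * k)))
    have hE : Real.exp (-(k * x) ^ 2)
        = Real.exp (-b * x ^ 2) * Real.exp (-(c * x) ^ 2) := by
      rw [← Real.exp_add]
      congr 1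
      have : (k * x) ^ 2 = (b + c ^ 2) * x ^ 2 := by rw [mul_pow, hk2]
      rw [this]; ring
    rw [hE] at hmain
    refine hmain.congr_deriv ?_
    field_simp
    ring
  have hint2 : Integrable (fun h : ℝ => |h| * Real.exp (-b * h ^ 2)) := by
    have := (integrable_mul_exp_neg_mul_sq hb).abs
    exact this.congr (Eventually.of_forall fun x => by
      simp [abs_mul, abs_of_pos (Real.exp_pos (-b * x ^ 2))])
  have hcont : Continuous fun h : ℝ => h * Real.exp (-b * h ^ 2) * erf (c * h) := by
    apply Continuous.mul
    · exact continuous_id.mul (by continuity)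
    · exact continuous_erf.comp (continuous_const.mul continuous_id)
  have hintsq : Integrable (fun h : ℝ => h ^ 2 * Real.exp (-b * h ^ 2)) := by
    have := integrable_rpow_mul_exp_neg_mul_sq hb (s := 2) (by norm_num)
    simpa [Real.rpow_two] using this
  have hf'int : Integrable (fun h : ℝ => h * Real.exp (-b * h ^ 2) * erf (c * h)) := by
    apply Integrable.mono' (hintsq.const_mul (2 * c / Real.sqrt π))
      hcont.aestronglyMeasurable
    refine ae_of_all _ fun x => ?_
    calc ‖x * Real.exp (-b * x ^ 2) * erf (c * x)‖
        = |x| * ‖Real.exp (-b * x ^ 2) * erf (c * x)‖ := by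
          rw [mul_assoc, norm_mul, Real.norm_eq_abs]
      _ ≤ |x| * (2 * c / Real.sqrt π * (|x| * Real.exp (-b * x ^ 2))) :=
          mul_le_mul_of_nonneg_left (exp_erf_bound b c x hc) (abs_nonneg x)
      _ = 2 * c / Real.sqrt π * (|x| ^ 2 * Real.exp (-b * x ^ 2)) := by ring
      _ = 2 * c / Real.sqrt π * (x ^ 2 * Real.exp (-b * x ^ 2)) := by rw [sq_abs]
  have t1top : Tendsto (fun h : ℝ => Real.exp (-b * h ^ 2) * erf (c * h)) atTop (𝓝 0) := by
    apply squeeze_zero_norm (fun x => exp_erf_bound b c x hc)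
    simpa using (tendsto_abs_mul_exp_sq_atTop b hb).const_mul (2 * c / Real.sqrt π)
  have t1bot : Tendsto (fun h : ℝ => Real.exp (-b * h ^ 2) * erf (c * h)) atBot (𝓝 0) := by
    apply squeeze_zero_norm (fun x => exp_erf_bound b c x hc)
    simpa using (tendsto_abs_mul_exp_sq_atBot b hb).const_mul (2 * c / Real.sqrt π)
  have t2top : Tendsto (fun h : ℝ => erf (k * h)) atTop (𝓝 1) :=
    erf_tendsto_atTop.comp (tendsto_id.const_mul_atTop hk)
  have t2bot : Tendsto (fun h : ℝ => erf (k * h)) atBot (𝓝 (-1)) :=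
    erf_tendsto_atBot.comp (tendsto_id.const_mul_atBot hk)
  have hlt : Tendsto Φ atTop (𝓝 (c / (2 * b * k))) := by
    have h := (t1top.const_mul (-(1 / (2 * b)))).add (t2top.const_mul (c / (2 * b * k)))
    rw [hΦdef]; convert h using 2; ring
  have hlb : Tendsto Φ atBot (𝓝 (-(c / (2 * b * k)))) := by
    have h := (t1bot.const_mul (-(1 / (2 * b)))).add (t2bot.const_mul (c / (2 * b * k)))
    rw [hΦdef]; convert h using 2; ring
  have h1 : ∫ x in Ioi (0:ℝ), x * Real.exp (-b * x ^ 2) * erf (c * x)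
      = c / (2 * b * k) - Φ 0 :=
    integral_Ioi_of_hasDerivAt_of_tendsto' (fun x _ => hderiv x) hf'int.integrableOn hlt
  have h2 : ∫ x in Iic (0:ℝ), x * Real.exp (-b * x ^ 2) * erf (c * x)
      = Φ 0 - (-(c / (2 * b * k))) :=
    integral_Iic_of_hasDerivAt_of_tendsto' (fun x _ => hderiv x) hf'int.integrableOn hlb
  have hΦ0 : Φ 0 = 0 := by simp [hΦdef, erf_zero]
  have hsplit := intervalIntegral.integral_Iic_add_Ioi (b := (0:ℝ))
    hf'int.integrableOn hf'int.integrableOn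
  rw [← hsplit, h1, h2, hΦ0]
  field_simp
  ring

/-- The Gaussian–erf integral identity yielding the closed form of the
univariate conditional mean estimator:
`∫ h·(πσ²)^{−1/2} exp(−h²/σ²)·erf(h/η) dh = σ²/(√π √(σ²+η²))`. -/
theorem stmt8 (σ η : ℝ) (hσ : 0 < σ) (hη : 0 < η) :
    ∫ h : ℝ, h * (π * σ ^ 2) ^ (-(1 : ℝ) / 2) * Real.exp (-h ^ 2 / σ ^ 2) * erf (h / η) =
      (1 / Real.sqrt π) * σ ^ 2 / Real.sqrt (σ ^ 2 + η ^ 2) := by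

  have hb : 0 < (σ ^ 2)⁻¹ := by positivity
  have hc : 0 < η⁻¹ := by positivity
  have hrw : ∀ h : ℝ,
      h * (π * σ ^ 2) ^ (-(1 : ℝ) / 2) * Real.exp (-h ^ 2 / σ ^ 2) * erf (h / η)
      = (π * σ ^ 2) ^ (-(1 : ℝ) / 2)
        * (h * Real.exp (-(σ ^ 2)⁻¹ * h ^ 2) * erf (η⁻¹ * h)) := by
    intro h
    rw [show -h ^ 2 / σ ^ 2 = -(σ ^ 2)⁻¹ * h ^ 2 by ring,
      show h / η = η⁻¹ * h by ring]
    ring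
  simp_rw [hrw]
  rw [integral_const_mul, key _ _ hb hc]
  have hC : (π * σ ^ 2) ^ (-(1 : ℝ) / 2) = 1 / (Real.sqrt π * σ) := by
    rw [show (-(1:ℝ)/2) = -(1/2) by norm_num, Real.rpow_neg (by positivity),
      ← Real.sqrt_eq_rpow, Real.sqrt_mul pi_pos.le, Real.sqrt_sq hσ.le, one_div]
  have hk : Real.sqrt ((σ ^ 2)⁻¹ + (η⁻¹) ^ 2) = Real.sqrt (σ ^ 2 + η ^ 2) / (σ * η) := by
    rw [show (σ ^ 2)⁻¹ + (η⁻¹) ^ 2 = (σ ^ 2 + η ^ 2) / (σ * η) ^ 2 by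
        field_simp; ring,
      Real.sqrt_div (by positivity), Real.sqrt_sq (by positivity)]
  rw [hC, hk]
  have hs : 0 < Real.sqrt (σ ^ 2 + η ^ 2) := Real.sqrt_pos.2 (by positivity)
  have hπ : 0 < Real.sqrt π := Real.sqrt_pos.2 pi_pos
  field_simp
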